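/- Let E be a finite ground set, f a polymatroid rank function on E, and let E be partitioned into nonempty blocks E'_1, …, E'_K with associated canonical values 0 < m_1 < m_2 < … < m_K. Let w ∈ ℝ^E be the weight vector with w_i = m_j for i ∈ E'_j, and let X* be the set of points x ∈ P(f) maximizing Σ_{i∈E} w_i x_i over P(f). Fix k ∈ {1, …, K}, let P_{>k} = ∪_{j>k} E'_j, define ĝ_k(S) = m_k · ( f(P_{>k} ∪ (S ∩ E'_k)) − f(P_{>k}) ) for S ⊆ E, and let U_k = { u ∈ ℝ^E : there is x ∈ X* with u_i = m_k x_i for i ∈ E'_k and u_i = 0 for i ∉ E'_k }. Then B(ĝ_k) ⊆ U_k ⊆ P(ĝ_k). -/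

import Mathlib

/-- The independence polytope of a set function on a finite ground set. -/
def indepP {E : Type*} [Fintype E] (f : Finset E → ℝ) : Set (E → ℝ) :=
  {x | (∀ i, 0 ≤ x i) ∧ ∀ S : Finset E, ∑ i ∈ S, x i ≤ f S}

/-- The base polytope of a set function on a finite ground set. -/
def baseB {E : Type*} [Fintype E] (f : Finset E → ℝ) : Set (E → ℝ) :=
  {x ∈ indepP f | ∑ i, x i = f Finset.univ}

section Aux
open Finset

variable {E : Type*} [Fintype E] [DecidableEq E]

def gre (f : Finset E → ℝ) : Finset E → List E → (E → ℝ) → (E → ℝ)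
  | _, [], x => x
  | A, e :: l, x =>
      gre f (insert e A) l (fun i => if i = e then f (insert e A) - f A else x i)

@[simp] lemma gre_nil (f : Finset E → ℝ) (A : Finset E) (x : E → ℝ) :
    gre f A [] x = x := rfl

lemma gre_cons (f : Finset E → ℝ) (A : Finset E) (e : E) (l : List E) (x : E → ℝ) :
    gre f A (e :: l) x
      = gre f (insert e A) l (fun i => if i = e then f (insert e A) - f A else x i) := rfl

lemma gre_of_not_mem (f : Finset E → ℝ) {A : Finset E} {l : List E} {x : E → ℝ} {i : E}
    (hi : i ∉ l) : gre f A l x i = x i := by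
  induction l generalizing A x with
  | nil => rfl
  | cons e t ih =>
      rw [gre_cons, ih (fun h => hi (List.mem_cons_of_mem _ h))]
      simp only [List.mem_cons, not_or] at hi
      simp [hi.1]

lemma gre_nonneg (f : Finset E → ℝ) (hfmono : ∀ A B : Finset E, A ⊆ B → f A ≤ f B)
    {A : Finset E} {l : List E} {x : E → ℝ} (hx : ∀ i, 0 ≤ x i) :
    ∀ i, 0 ≤ gre f A l x i := by
  induction l generalizing A x with
  | nil => exact hx
  | cons e t ih =>
      rw [gre_cons]
      refine ih (fun i => ?_)
      by_cases h : i = e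
      · simp [h, sub_nonneg, hfmono A (insert e A) (subset_insert _ _)]
      · simpa [h] using hx i

lemma gre_feas (f : Finset E → ℝ)
    (hfsub : ∀ A B : Finset E, f (A ∪ B) + f (A ∩ B) ≤ f A + f B)
    {A : Finset E} {l : List E} {x : E → ℝ}
    (hnd : l.Nodup) (hla : ∀ i ∈ l, i ∉ A)
    (hx : ∀ T ⊆ A, ∑ i ∈ T, x i ≤ f T) :
    ∀ T ⊆ A ∪ l.toFinset, ∑ i ∈ T, gre f A l x i ≤ f T := by
  induction l generalizing A x with
  | nil => simpa using hx
  | cons e t ih =>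
      intro T hT
      rw [gre_cons]
      have heA : e ∉ A := hla e List.mem_cons_self
      have hnd' : t.Nodup := (List.nodup_cons.mp hnd).2
      have het : e ∉ t := (List.nodup_cons.mp hnd).1
      have hla' : ∀ i ∈ t, i ∉ insert e A := by
        intro i hi
        simp only [mem_insert, not_or]
        exact ⟨fun h => het (h ▸ hi), hla i (List.mem_cons_of_mem _ hi)⟩
      refine ih hnd' hla' ?_ T ?_
      · -- new base feasibility
        intro T hT
        by_cases heT : e ∈ T
        · set x' : E → ℝ := fun i => if i = e then f (insert e A) - f A else x i with hx'
          have hTe : T.erase e ⊆ A := by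
            intro i hi
            rw [mem_erase] at hi
            have := hT hi.2
            rw [mem_insert] at this
            tauto
          have hsum : ∑ i ∈ T, x' i = x' e + ∑ i ∈ T.erase e, x i := by
            rw [← Finset.add_sum_erase T x' heT]
            congr 1
            refine Finset.sum_congr rfl (fun i hi => ?_)
            have : i ≠ e := (mem_erase.mp hi).1
            simp [hx', this]
          have hunion : T ∪ A = insert e A := by
            apply Finset.Subset.antisymm
            · intro i hi
              rcases mem_union.mp hi with h | h
              · exact hT h
              · exact mem_insert_of_mem h
            · intro i hi
              rcases mem_insert.mp hi with h | h
              · exact mem_union_left _ (h ▸ heT)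
              · exact mem_union_right _ h
          have hinter : T ∩ A = T.erase e := by
            ext i
            simp only [mem_inter, mem_erase]
            constructor
            · rintro ⟨h1, h2⟩
              exact ⟨fun he => heA (he ▸ h2), h1⟩
            · rintro ⟨h1, h2⟩
              exact ⟨h2, hTe (mem_erase.mpr ⟨h1, h2⟩)⟩
          have hs := hfsub T A
          rw [hunion, hinter] at hs
          have hb := hx (T.erase e) hTe
          have : x' e = f (insert e A) - f A := by simp [hx']
          rw [hsum, this]
          linarith
        · have hTe : T ⊆ A := by
            intro i hi
            have := hT hi
            simp only [mem_insert] at this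
            rcases this with h | h
            · exact absurd (h ▸ hi) heT
            · exact h
          calc ∑ i ∈ T, (fun i => if i = e then f (insert e A) - f A else x i) i
              = ∑ i ∈ T, x i := Finset.sum_congr rfl (fun i hi => by
                 have : i ≠ e := fun h => heT (h ▸ hi); simp [this])
            _ ≤ f T := hx T hTe
      · intro i hi
        have := hT hi
        simp only [mem_union, mem_insert, List.toFinset_cons] at this ⊢
        tauto

lemma gre_sum (f : Finset E → ℝ) {A : Finset E} {l : List E} {x : E → ℝ}
    (hnd : l.Nodup) (hla : ∀ i ∈ l, i ∉ A) :
    ∑ i ∈ A ∪ l.toFinset, gre f A l x i = ∑ i ∈ A, x i + (f (A ∪ l.toFinset) - f A) := by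
  induction l generalizing A x with
  | nil => simp
  | cons e t ih =>
      have heA : e ∉ A := hla e List.mem_cons_self
      have hnd' : t.Nodup := (List.nodup_cons.mp hnd).2
      have het : e ∉ t := (List.nodup_cons.mp hnd).1
      have hla' : ∀ i ∈ t, i ∉ insert e A := by
        intro i hi
        simp only [mem_insert, not_or]
        exact ⟨fun h => het (h ▸ hi), hla i (List.mem_cons_of_mem _ hi)⟩
      have hAA : insert e A ∪ t.toFinset = A ∪ (e :: t).toFinset := by
        ext i; simp only [mem_union, mem_insert, List.toFinset_cons]; tauto
      rw [gre_cons, ← hAA, ih hnd' hla', hAA]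
      have : ∑ i ∈ insert e A, (fun i => if i = e then f (insert e A) - f A else x i) i
          = (f (insert e A) - f A) + ∑ i ∈ A, x i := by
        rw [Finset.sum_insert heA]
        congr 1
        · simp
        · refine Finset.sum_congr rfl (fun i hi => ?_)
          have : i ≠ e := fun h => heA (h ▸ hi)
          simp [this]
      rw [this]
      ring

lemma gre_append (f : Finset E → ℝ) (A : Finset E) (l₁ l₂ : List E) (x : E → ℝ) :
    gre f A (l₁ ++ l₂) x = gre f (A ∪ l₁.toFinset) l₂ (gre f A l₁ x) := by
  induction l₁ generalizing A x with
  | nil => simp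
  | cons e t ih =>
      rw [List.cons_append, gre_cons, ih, gre_cons]
      have : insert e A ∪ t.toFinset = A ∪ (e :: t).toFinset := by
        ext i; simp only [mem_union, mem_insert, List.toFinset_cons]; tauto
      rw [this]

lemma filter_split_of_sorted {α : Type*} (p : α → Bool) :
    ∀ (l : List α), l.Pairwise (fun a b => p b = true → p a = true) →
      l.filter p ++ l.filter (fun a => !(p a)) = l := by
  intro l
  induction l with
  | nil => simp
  | cons a t ih =>
      intro hp
      rw [List.pairwise_cons] at hp
      by_cases ha : p a = true
      · rw [List.filter_cons_of_pos ha, List.filter_cons_of_neg (by simp [ha]),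
          List.cons_append, ih hp.2]
      · have hall : ∀ b ∈ t, p b = false := by
          intro b hb
          by_contra h
          exact ha (hp.1 b hb (by simpa using h))
        rw [List.filter_cons_of_neg ha, List.filter_cons_of_pos (by simpa using ha)]
        rw [List.filter_eq_nil_iff.mpr (fun b hb => by simp [hall b hb]), List.nil_append]
        congr 1
        exact List.filter_eq_self.mpr (fun b hb => by simp [hall b hb])

def cgap {K : ℕ} (mv : Fin K → ℝ) (j : Fin K) : ℝ :=
  mv j - (if h : (j : ℕ) = 0 then 0
    else mv ⟨(j : ℕ) - 1, Nat.lt_of_le_of_lt (Nat.sub_le _ _) j.isLt⟩)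

lemma cgap_pos {K : ℕ} {mv : Fin K → ℝ} (hmono : StrictMono mv) (hpos : ∀ j, 0 < mv j)
    (j : Fin K) : 0 < cgap mv j := by
  unfold cgap
  by_cases h : (j : ℕ) = 0
  · simpa [h] using hpos j
  · rw [dif_neg h, sub_pos]
    exact hmono (by simp [Fin.lt_def]; omega)

lemma cgap_sum {K : ℕ} (mv : Fin K → ℝ) :
    ∀ (n : ℕ) (j : Fin K), (j : ℕ) = n →
      ∑ j' ∈ Finset.univ.filter (· ≤ j), cgap mv j' = mv j := by
  intro n
  induction n with
  | zero =>
      intro j hj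
      have hs : Finset.univ.filter (· ≤ j) = {j} := by
        ext i
        simp only [mem_filter, mem_univ, true_and, mem_singleton, Fin.le_def, Fin.ext_iff]
        omega
      simp [hs, cgap, hj]
  | succ m ih =>
      intro j hj
      have hmK : m < K := by omega
      set j' : Fin K := ⟨m, hmK⟩ with hj'
      have hs : Finset.univ.filter (· ≤ j) = insert j (Finset.univ.filter (· ≤ j')) := by
        ext i
        simp only [mem_filter, mem_univ, true_and, mem_insert, Fin.le_def, Fin.ext_iff, hj']
        omega
      have hnot : j ∉ Finset.univ.filter (· ≤ j') := by
        simp only [mem_filter, mem_univ, true_and, Fin.le_def, hj']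
        omega
      rw [hs, Finset.sum_insert hnot, ih j' rfl]
      have : cgap mv j = mv j - mv j' := by
        unfold cgap
        rw [dif_neg (by omega)]
        congr 2
        simp [Fin.ext_iff, hj, hj']
      rw [this]
      ring

def Qset {K : ℕ} (blocks : Fin K → Finset E) (j : Fin K) : Finset E :=
  (Finset.univ.filter (fun j' => j ≤ j')).biUnion blocks

lemma abel_identity {K : ℕ} (blocks : Fin K → Finset E)
    (hdisj : ∀ j j' : Fin K, j ≠ j' → Disjoint (blocks j) (blocks j'))
    (hcover : Finset.univ.biUnion blocks = (Finset.univ : Finset E))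
    (mv : Fin K → ℝ) (w : E → ℝ) (hw : ∀ j : Fin K, ∀ i ∈ blocks j, w i = mv j)
    (x : E → ℝ) :
    ∑ i, w i * x i = ∑ j, cgap mv j * ∑ i ∈ Qset blocks j, x i := by
  have hpd : ∀ s : Finset (Fin K), (↑s : Set (Fin K)).PairwiseDisjoint blocks :=
    fun s a _ b _ hab => hdisj a b hab
  have h1 : ∑ i, w i * x i = ∑ j, mv j * ∑ i ∈ blocks j, x i := by
    rw [← hcover, Finset.sum_biUnion (hpd _)]
    refine Finset.sum_congr rfl (fun j _ => ?_)
    rw [Finset.mul_sum]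
    exact Finset.sum_congr rfl (fun i hi => by rw [hw j i hi])
  have h2 : ∀ j', cgap mv j' * ∑ i ∈ Qset blocks j', x i
      = ∑ j ∈ Finset.univ.filter (fun j2 => j' ≤ j2), cgap mv j' * ∑ i ∈ blocks j, x i := by
    intro j'
    rw [Qset, Finset.sum_biUnion (hpd _), Finset.mul_sum]
  have h3 : ∀ j, mv j * ∑ i ∈ blocks j, x i
      = ∑ j' ∈ Finset.univ.filter (· ≤ j), cgap mv j' * ∑ i ∈ blocks j, x i := by
    intro j
    rw [← Finset.sum_mul, cgap_sum mv (j : ℕ) j rfl]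
  rw [h1]
  calc ∑ j, mv j * ∑ i ∈ blocks j, x i
      = ∑ j, ∑ j' ∈ Finset.univ.filter (· ≤ j), cgap mv j' * ∑ i ∈ blocks j, x i :=
        Finset.sum_congr rfl (fun j _ => h3 j)
    _ = ∑ j, ∑ j', if j' ≤ j then cgap mv j' * ∑ i ∈ blocks j, x i else 0 :=
        Finset.sum_congr rfl (fun j _ => (Finset.sum_filter _ _))
    _ = ∑ j', ∑ j, if j' ≤ j then cgap mv j' * ∑ i ∈ blocks j, x i else 0 := Finset.sum_comm
    _ = ∑ j', ∑ j ∈ Finset.univ.filter (fun j2 => j' ≤ j2), cgap mv j' * ∑ i ∈ blocks j, x i :=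
        Finset.sum_congr rfl (fun j' _ => (Finset.sum_filter _ _).symm)
    _ = ∑ j', cgap mv j' * ∑ i ∈ Qset blocks j', x i :=
        Finset.sum_congr rfl (fun j' _ => (h2 j').symm)

section BL
variable {K : ℕ} (blocks : Fin K → Finset E)

noncomputable def blist (Js : List (Fin K)) : List E := Js.flatMap fun j => (blocks j).toList

lemma mem_blist {i : E} {Js : List (Fin K)} :
    i ∈ blist blocks Js ↔ ∃ j ∈ Js, i ∈ blocks j := by
  simp [blist]

lemma blist_toFinset (Js : List (Fin K)) :
    (blist blocks Js).toFinset = Js.toFinset.biUnion blocks := by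
  ext i; simp [blist]

lemma blist_append (J1 J2 : List (Fin K)) :
    blist blocks (J1 ++ J2) = blist blocks J1 ++ blist blocks J2 := by
  simp [blist]

lemma blist_nodup (hdisj : ∀ j j' : Fin K, j ≠ j' → Disjoint (blocks j) (blocks j'))
    {Js : List (Fin K)} (hnd : Js.Nodup) : (blist blocks Js).Nodup := by
  rw [blist, List.nodup_flatMap]
  refine ⟨fun j _ => (blocks j).nodup_toList, ?_⟩
  refine hnd.imp (fun {a b} hne => ?_)
  intro i hi1 hi2
  rw [Finset.mem_toList] at hi1 hi2
  exact Finset.disjoint_left.mp (hdisj a b hne) hi1 hi2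

end BL

lemma main_constr {K : ℕ} (f : Finset E → ℝ)
    (hf0 : f ∅ = 0)
    (hfmono : ∀ A B : Finset E, A ⊆ B → f A ≤ f B)
    (hfsub : ∀ A B : Finset E, f (A ∪ B) + f (A ∩ B) ≤ f A + f B)
    (blocks : Fin K → Finset E)
    (hdisj : ∀ j j' : Fin K, j ≠ j' → Disjoint (blocks j) (blocks j'))
    (hcover : Finset.univ.biUnion blocks = (Finset.univ : Finset E))
    (k : Fin K) (Pgt : Finset E)
    (hPgt : Pgt = (Finset.univ.filter (fun j => k < j)).biUnion blocks)
    (mid : E → ℝ) (hmid0 : ∀ i, 0 ≤ mid i) (hmids : ∀ i, i ∉ blocks k → mid i = 0)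
    (hmidle : ∀ T ⊆ blocks k, ∑ i ∈ T, mid i ≤ f (Pgt ∪ T) - f Pgt)
    (hmidsum : ∑ i ∈ blocks k, mid i = f (Pgt ∪ blocks k) - f Pgt) :
    ∃ x : E → ℝ, x ∈ indepP f ∧
      (∀ j, ∑ i ∈ Qset blocks j, x i = f (Qset blocks j)) ∧
      (∀ i ∈ blocks k, x i = mid i) := by
  classical
  have hblkdis : ∀ {j j' : Fin K} {i : E}, i ∈ blocks j → i ∈ blocks j' → j = j' := by
    intro j j' i h1 h2
    by_contra hne
    exact Finset.disjoint_left.mp (hdisj j j' hne) h1 h2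
  set J : List (Fin K) := (List.finRange K).reverse with hJ
  have hJnd : J.Nodup := List.nodup_reverse.mpr (List.nodup_finRange K)
  have hJmem : ∀ j : Fin K, j ∈ J := fun j => by simp [hJ, List.mem_finRange]
  have hJsort : J.Pairwise (fun a b => b < a) :=
    (List.pairwise_reverse).mpr (List.pairwise_lt_finRange K)
  set Jhi : List (Fin K) := J.filter (fun a => k < a) with hJhi
  set Jlo : List (Fin K) := J.filter (fun a => a < k) with hJlo
  have hJhind : Jhi.Nodup := hJnd.filter _
  have hJlond : Jlo.Nodup := hJnd.filter _
  have hJhisort : Jhi.Pairwise (fun a b => b < a) := hJsort.filter _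
  have hJlosort : Jlo.Pairwise (fun a b => b < a) := hJsort.filter _
  set Lhi : List E := blist blocks Jhi with hLhi
  set Llo : List E := blist blocks Jlo with hLlo
  have hLhind : Lhi.Nodup := blist_nodup blocks hdisj hJhind
  have hLlond : Llo.Nodup := blist_nodup blocks hdisj hJlond
  have hLhiF : Lhi.toFinset = Pgt := by
    rw [hLhi, blist_toFinset, hPgt]
    congr 1
    ext a
    simp [hJhi, List.mem_filter, hJmem]
  set Qk : Finset E := Qset blocks k with hQk
  have hQkeq : Qk = Pgt ∪ blocks k := by
    rw [hQk, Qset, hPgt]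
    ext i
    simp only [Finset.mem_biUnion, Finset.mem_filter, Finset.mem_univ, true_and,
      Finset.mem_union]
    constructor
    · rintro ⟨j, hj, hij⟩
      rcases lt_or_eq_of_le hj with h | h
      · exact Or.inl ⟨j, h, hij⟩
      · exact Or.inr (h ▸ hij)
    · rintro (⟨j, hj, hij⟩ | h)
      · exact ⟨j, le_of_lt hj, hij⟩
      · exact ⟨k, le_refl k, h⟩
  have hPgtk : Disjoint Pgt (blocks k) := by
    rw [Finset.disjoint_left]
    intro i hi hik
    rw [hPgt, Finset.mem_biUnion] at hi
    obtain ⟨j, hj, hij⟩ := hi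
    rw [Finset.mem_filter] at hj
    exact absurd (hblkdis hij hik) (ne_of_gt hj.2)
  set x1 : E → ℝ := gre f ∅ Lhi (fun _ => 0) with hx1
  have hx1supp : ∀ i, i ∉ Pgt → x1 i = 0 := by
    intro i hi
    rw [hx1, gre_of_not_mem]
    intro hmem
    exact hi (hLhiF ▸ List.mem_toFinset.mpr hmem)
  have hbase0 : ∀ T ⊆ (∅ : Finset E), ∑ i ∈ T, (0:ℝ) ≤ f T := by
    intro T hT
    rw [Finset.subset_empty.mp hT]
    simp [hf0]
  have hx1feas : ∀ T ⊆ Pgt, ∑ i ∈ T, x1 i ≤ f T := by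
    intro T hT
    refine gre_feas f hfsub hLhind (by simp) (by simpa using hbase0) T ?_
    rw [hLhiF]
    simpa using hT
  have hx1nn : ∀ i, 0 ≤ x1 i := gre_nonneg f hfmono (fun _ => le_refl 0)
  have hx1sum : ∑ i ∈ Pgt, x1 i = f Pgt := by
    have := gre_sum f (A := ∅) (x := fun _ => 0) hLhind (by simp)
    rw [Finset.empty_union, hLhiF] at this
    simpa [hf0] using this
  set x2 : E → ℝ := fun i => x1 i + mid i with hx2
  have hsum_x2 : ∀ T : Finset E, ∑ i ∈ T, x2 i
      = ∑ i ∈ T ∩ Pgt, x1 i + ∑ i ∈ T ∩ blocks k, mid i := by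
    intro T
    rw [hx2, Finset.sum_add_distrib]
    congr 1
    · refine (Finset.sum_subset Finset.inter_subset_left (fun i hi hni => ?_)).symm
      exact hx1supp i (fun h => hni (Finset.mem_inter.mpr ⟨hi, h⟩))
    · refine (Finset.sum_subset Finset.inter_subset_left (fun i hi hni => ?_)).symm
      exact hmids i (fun h => hni (Finset.mem_inter.mpr ⟨hi, h⟩))
  have hx2feas : ∀ T ⊆ Qk, ∑ i ∈ T, x2 i ≤ f T := by
    intro T hT
    rw [hsum_x2]
    have h1 : ∑ i ∈ T ∩ Pgt, x1 i ≤ f (T ∩ Pgt) := hx1feas _ Finset.inter_subset_right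
    have h2 : ∑ i ∈ T ∩ blocks k, mid i ≤ f (Pgt ∪ T ∩ blocks k) - f Pgt :=
      hmidle _ Finset.inter_subset_right
    have hs := hfsub T Pgt
    have hu : T ∪ Pgt = Pgt ∪ T ∩ blocks k := by
      ext i
      simp only [Finset.mem_union, Finset.mem_inter]
      constructor
      · rintro (h | h)
        · have := hT h
          rw [hQkeq, Finset.mem_union] at this
          tauto
        · tauto
      · tauto
    rw [hu] at hs
    linarith
  have hx2sumQk : ∑ i ∈ Qk, x2 i = f Qk := by
    rw [hsum_x2]
    have h1 : Qk ∩ Pgt = Pgt := by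
      rw [Finset.inter_eq_right.mpr]
      rw [hQkeq]; exact Finset.subset_union_left
    have h2 : Qk ∩ blocks k = blocks k := by
      rw [Finset.inter_eq_right.mpr]
      rw [hQkeq]; exact Finset.subset_union_right
    rw [h1, h2, hx1sum, hmidsum, hQkeq]
    ring
  have hLloQk : ∀ i ∈ Llo, i ∉ Qk := by
    intro i hi hiQ
    rw [hLlo, mem_blist] at hi
    obtain ⟨j, hj, hij⟩ := hi
    rw [hJlo, List.mem_filter] at hj
    have hjk : j < k := by simpa using hj.2
    rw [hQk, Qset, Finset.mem_biUnion] at hiQ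
    obtain ⟨j', hj', hij'⟩ := hiQ
    rw [Finset.mem_filter] at hj'
    have := hblkdis hij hij'
    subst this
    exact absurd hj'.2 (not_le_of_gt hjk)
  set x : E → ℝ := gre f Qk Llo x2 with hx
  have hxnn : ∀ i, 0 ≤ x i :=
    gre_nonneg f hfmono (fun i => add_nonneg (hx1nn i) (hmid0 i))
  have hUniv : Qk ∪ Llo.toFinset = Finset.univ := by
    apply Finset.eq_univ_of_forall
    intro i
    have : i ∈ Finset.univ.biUnion blocks := hcover ▸ Finset.mem_univ i
    rw [Finset.mem_biUnion] at this
    obtain ⟨j, _, hij⟩ := this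
    rcases le_or_gt k j with h | h
    · refine Finset.mem_union_left _ ?_
      rw [hQk, Qset, Finset.mem_biUnion]
      exact ⟨j, Finset.mem_filter.mpr ⟨Finset.mem_univ _, h⟩, hij⟩
    · refine Finset.mem_union_right _ ?_
      rw [List.mem_toFinset, hLlo, mem_blist]
      exact ⟨j, by simp [hJlo, List.mem_filter, hJmem, h], hij⟩
  have hxfeas : ∀ S : Finset E, ∑ i ∈ S, x i ≤ f S := by
    intro S
    exact gre_feas f hfsub hLlond hLloQk hx2feas S (by rw [hUniv]; exact Finset.subset_univ S)
  have hxmid : ∀ i ∈ blocks k, x i = mid i := by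
    intro i hi
    have hiQk : i ∈ Qk := by rw [hQkeq]; exact Finset.mem_union_right _ hi
    have : i ∉ Llo := fun h => hLloQk i h hiQk
    rw [hx, gre_of_not_mem f this]
    have h0 : x1 i = 0 := hx1supp i (Finset.disjoint_right.mp hPgtk hi)
    simp [hx2, h0]
  refine ⟨x, ⟨hxnn, hxfeas⟩, ?_, hxmid⟩
  intro j
  rcases le_or_gt j k with hjk | hkj
  · -- low case
    set p : Fin K → Prop := fun a => j ≤ a with hp
    have hsplit : Jlo.filter (fun a => j ≤ a) ++ Jlo.filter (fun a => !(decide (j ≤ a))) = Jlo := by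
      refine filter_split_of_sorted _ _ (hJlosort.imp ?_)
      intro a b hba hb
      simp only [decide_eq_true_eq] at hb ⊢
      exact le_of_lt (lt_of_le_of_lt hb hba)
    set J1 := Jlo.filter (fun a => j ≤ a) with hJ1
    set J2 := Jlo.filter (fun a => !(decide (j ≤ a))) with hJ2
    set L1 := blist blocks J1 with hL1
    set L2 := blist blocks J2 with hL2
    have hLsplit : Llo = L1 ++ L2 := by
      rw [hL1, hL2, ← blist_append, hsplit]
    have hQsetj : Qset blocks j = Qk ∪ L1.toFinset := by
      rw [hL1, blist_toFinset, hQk, Qset, Qset]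
      ext i
      simp only [Finset.mem_union, Finset.mem_biUnion, Finset.mem_filter, Finset.mem_univ,
        true_and, List.mem_toFinset, hJ1, List.mem_filter, hJlo, decide_eq_true_eq]
      constructor
      · rintro ⟨j', hj', hij'⟩
        rcases le_or_gt k j' with h | h
        · exact Or.inl ⟨j', h, hij'⟩
        · exact Or.inr ⟨j', ⟨by simp [hJmem, h], hj'⟩, hij'⟩
      · rintro (⟨j', hj', hij'⟩ | ⟨j', ⟨hj'm, hj'⟩, hij'⟩)
        · exact ⟨j', le_trans hjk hj', hij'⟩
        · exact ⟨j', hj', hij'⟩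
    have hL2dis : ∀ i ∈ Qset blocks j, i ∉ L2 := by
      intro i hi hiL2
      rw [hQsetj, Finset.mem_union] at hi
      rcases hi with h | h
      · exact hLloQk i (hLsplit ▸ List.mem_append_right L1 hiL2) h
      · have hnd2 := hLsplit ▸ hLlond
        exact (List.disjoint_of_nodup_append hnd2) (List.mem_toFinset.mp h) hiL2
    have hxval : ∀ i ∈ Qset blocks j, x i = gre f Qk L1 x2 i := by
      intro i hi
      rw [hx, hLsplit, gre_append]
      exact gre_of_not_mem f (hL2dis i hi)
    rw [Finset.sum_congr rfl hxval]
    have hL1Qk : ∀ i ∈ L1, i ∉ Qk := by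
      intro i hi
      exact hLloQk i (hLsplit ▸ List.mem_append_left L2 hi)
    have hL1nd : L1.Nodup := (hLsplit ▸ hLlond).of_append_left
    have := gre_sum f (A := Qk) (x := x2) hL1nd hL1Qk
    rw [← hQsetj] at this
    rw [this, hx2sumQk]
    ring
  · -- high case
    have hQsetPgt : Qset blocks j ⊆ Pgt := by
      rw [Qset, hPgt]
      intro i hi
      rw [Finset.mem_biUnion] at hi ⊢
      obtain ⟨j', hj', hij'⟩ := hi
      rw [Finset.mem_filter] at hj'
      exact ⟨j', Finset.mem_filter.mpr ⟨Finset.mem_univ _, lt_of_lt_of_le hkj hj'.2⟩, hij'⟩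
    have hxval : ∀ i ∈ Qset blocks j, x i = x1 i := by
      intro i hi
      have hiPgt : i ∈ Pgt := hQsetPgt hi
      have hiQk : i ∈ Qk := by rw [hQkeq]; exact Finset.mem_union_left _ hiPgt
      have hnLlo : i ∉ Llo := fun h => hLloQk i h hiQk
      rw [hx, gre_of_not_mem f hnLlo]
      have h0 : mid i = 0 := hmids i (Finset.disjoint_left.mp hPgtk hiPgt)
      simp [hx2, h0]
    rw [Finset.sum_congr rfl hxval]
    -- split Jhi
    have hsplit : Jhi.filter (fun a => j ≤ a) ++ Jhi.filter (fun a => !(decide (j ≤ a))) = Jhi := by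
      refine filter_split_of_sorted _ _ (hJhisort.imp ?_)
      intro a b hba hb
      simp only [decide_eq_true_eq] at hb ⊢
      exact le_of_lt (lt_of_le_of_lt hb hba)
    set J1 := Jhi.filter (fun a => j ≤ a) with hJ1
    set J2 := Jhi.filter (fun a => !(decide (j ≤ a))) with hJ2
    set L1 := blist blocks J1 with hL1
    set L2 := blist blocks J2 with hL2
    have hLsplit : Lhi = L1 ++ L2 := by
      rw [hL1, hL2, ← blist_append, hsplit]
    have hQsetj : Qset blocks j = L1.toFinset := by
      rw [hL1, blist_toFinset, Qset]
      ext i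
      simp only [Finset.mem_biUnion, Finset.mem_filter, Finset.mem_univ, true_and,
        List.mem_toFinset, hJ1, List.mem_filter, hJhi, decide_eq_true_eq]
      constructor
      · rintro ⟨j', hj', hij'⟩
        exact ⟨j', ⟨by simp [hJmem, lt_of_lt_of_le hkj hj'], hj'⟩, hij'⟩
      · rintro ⟨j', ⟨_, hj'⟩, hij'⟩
        exact ⟨j', hj', hij'⟩
    have hL2dis : ∀ i ∈ Qset blocks j, i ∉ L2 := by
      intro i hi hiL2
      have hnd2 := hLsplit ▸ hLhind
      exact (List.disjoint_of_nodup_append hnd2) (List.mem_toFinset.mp (hQsetj ▸ hi)) hiL2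
    have hxval2 : ∀ i ∈ Qset blocks j, x1 i = gre f ∅ L1 (fun _ => 0) i := by
      intro i hi
      rw [hx1, hLsplit, gre_append]
      exact gre_of_not_mem f (hL2dis i hi)
    rw [Finset.sum_congr rfl hxval2]
    have hL1nd : L1.Nodup := (hLsplit ▸ hLhind).of_append_left
    have := gre_sum f (A := ∅) (x := fun _ => (0:ℝ)) hL1nd (by simp)
    rw [Finset.empty_union, ← hQsetj] at this
    simpa [hf0] using this

end Aux

/-- the set `U_k` of fake-utility vectors of welfare-optimal
allocations for the bucket `k` is sandwiched between the base polytope and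
the independence polytope of the rank function `ĝ_k`. -/
theorem stmt_7 {E : Type*} [Fintype E] [DecidableEq E]
    (f : Finset E → ℝ)
    (hf0 : f ∅ = 0)
    (hfmono : ∀ A B : Finset E, A ⊆ B → f A ≤ f B)
    (hfsub : ∀ A B : Finset E, f (A ∪ B) + f (A ∩ B) ≤ f A + f B)
    (K : ℕ) (blocks : Fin K → Finset E)
    (hne : ∀ j, (blocks j).Nonempty)
    (hdisj : ∀ j j' : Fin K, j ≠ j' → Disjoint (blocks j) (blocks j'))
    (hcover : Finset.univ.biUnion blocks = (Finset.univ : Finset E))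
    (mv : Fin K → ℝ) (hmvmono : StrictMono mv) (hmvpos : ∀ j, 0 < mv j)
    (w : E → ℝ) (hw : ∀ j : Fin K, ∀ i ∈ blocks j, w i = mv j)
    (Xstar : Set (E → ℝ))
    (hX : Xstar = {x ∈ indepP f |
      ∀ y ∈ indepP f, ∑ i, w i * y i ≤ ∑ i, w i * x i})
    (k : Fin K)
    (Pgt : Finset E)
    (hPgt : Pgt = (Finset.univ.filter (fun j => k < j)).biUnion blocks)
    (ghat : Finset E → ℝ)
    (hghat : ∀ S : Finset E, ghat S = mv k * (f (Pgt ∪ (S ∩ blocks k)) - f Pgt))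
    (U : Set (E → ℝ))
    (hU : U = {u | ∃ x ∈ Xstar,
      (∀ i ∈ blocks k, u i = mv k * x i) ∧ ∀ i ∉ blocks k, u i = 0}) :
    baseB ghat ⊆ U ∧ U ⊆ indepP ghat := by
  classical
  have hmk : (0:ℝ) < mv k := hmvpos k
  have hmkne : mv k ≠ 0 := ne_of_gt hmk
  -- the contraction g
  set g : Finset E → ℝ := fun S => f (Pgt ∪ S) - f Pgt with hg
  have hg0 : g ∅ = 0 := by simp [hg]
  have hgmono : ∀ A B : Finset E, A ⊆ B → g A ≤ g B := by
    intro A B hAB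
    simp only [hg, sub_le_sub_iff_right]
    exact hfmono _ _ (Finset.union_subset_union_right hAB)
  have hgsub : ∀ A B : Finset E, g (A ∪ B) + g (A ∩ B) ≤ g A + g B := by
    intro A B
    have h := hfsub (Pgt ∪ A) (Pgt ∪ B)
    have h1 : (Pgt ∪ A) ∪ (Pgt ∪ B) = Pgt ∪ (A ∪ B) := by
      ext i; simp only [Finset.mem_union]; tauto
    have h2 : (Pgt ∪ A) ∩ (Pgt ∪ B) = Pgt ∪ (A ∩ B) := by
      ext i; simp only [Finset.mem_union, Finset.mem_inter]; tauto
    rw [h1, h2] at h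
    simp only [hg]
    linarith
  have hghat' : ∀ S : Finset E, ghat S = mv k * g (S ∩ blocks k) := fun S => hghat S
  have hblkdis : ∀ {j j' : Fin K} {i : E}, i ∈ blocks j → i ∈ blocks j' → j = j' := by
    intro j j' i h1 h2
    by_contra hne'
    exact Finset.disjoint_left.mp (hdisj j j' hne') h1 h2
  have hPgtk : Disjoint Pgt (blocks k) := by
    rw [Finset.disjoint_left]
    intro i hi hik
    rw [hPgt, Finset.mem_biUnion] at hi
    obtain ⟨j, hj, hij⟩ := hi
    rw [Finset.mem_filter] at hj
    exact absurd (hblkdis hij hik) (ne_of_gt hj.2)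
  -- tightness of Pgt for any vector tight on all Qsets
  have hPgt_tight : ∀ x : E → ℝ,
      (∀ j, ∑ i ∈ Qset blocks j, x i = f (Qset blocks j)) →
      ∑ i ∈ Pgt, x i = f Pgt := by
    intro x hx
    by_cases hK : (k : ℕ) + 1 < K
    · set j1 : Fin K := ⟨(k : ℕ) + 1, hK⟩ with hj1
      have : Pgt = Qset blocks j1 := by
        rw [hPgt, Qset]
        refine Finset.biUnion_congr ?_ (fun a _ => rfl)
        ext a
        simp only [Finset.mem_filter, Finset.mem_univ, true_and, Fin.lt_def, Fin.le_def, hj1]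
        omega
      rw [this]
      exact hx j1
    · have : Pgt = ∅ := by
        rw [hPgt, Finset.filter_eq_empty_iff.mpr, Finset.biUnion_empty]
        intro j _
        simp only [Fin.lt_def, not_lt]
        omega
      rw [this]
      simp [hf0]
  -- any feasible vector tight on all Qsets is optimal
  have hopt : ∀ x ∈ indepP f,
      (∀ j, ∑ i ∈ Qset blocks j, x i = f (Qset blocks j)) →
      ∀ y ∈ indepP f, ∑ i, w i * y i ≤ ∑ i, w i * x i := by
    intro x _ hxt y hy
    rw [abel_identity blocks hdisj hcover mv w hw y,
      abel_identity blocks hdisj hcover mv w hw x]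
    refine Finset.sum_le_sum (fun j _ => ?_)
    rw [hxt j]
    exact mul_le_mul_of_nonneg_left (hy.2 _) (le_of_lt (cgap_pos hmvmono hmvpos j))
  -- any optimal vector is tight on all Qsets
  have htight : ∀ x ∈ Xstar, ∀ j, ∑ i ∈ Qset blocks j, x i = f (Qset blocks j) := by
    intro x hxX j
    rw [hX] at hxX
    obtain ⟨hxP, hxopt⟩ := hxX
    -- construct the pure greedy point
    set midh : E → ℝ := gre g ∅ (blocks k).toList (fun _ => 0) with hmidh
    have hmidh0 : ∀ i, 0 ≤ midh i := gre_nonneg g hgmono (fun _ => le_refl 0)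
    have hmidhs : ∀ i, i ∉ blocks k → midh i = 0 := by
      intro i hi
      rw [hmidh, gre_of_not_mem]
      exact fun h => hi (Finset.mem_toList.mp h)
    have hbase0 : ∀ T ⊆ (∅ : Finset E), ∑ i ∈ T, (0:ℝ) ≤ g T := by
      intro T hT
      rw [Finset.subset_empty.mp hT]
      simp [hg0]
    have hmidhle : ∀ T ⊆ blocks k, ∑ i ∈ T, midh i ≤ g T := by
      intro T hT
      refine gre_feas g hgsub (blocks k).nodup_toList (by simp) hbase0 T ?_
      simpa using hT
    have hmidhsum : ∑ i ∈ blocks k, midh i = g (blocks k) := by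
      have := gre_sum g (A := ∅) (x := fun _ => (0:ℝ)) (blocks k).nodup_toList (by simp)
      rw [Finset.empty_union, Finset.toList_toFinset] at this
      simpa [hg0] using this
    obtain ⟨xh, hxhP, hxht, _⟩ := main_constr f hf0 hfmono hfsub blocks hdisj hcover k Pgt hPgt
      midh hmidh0 hmidhs (by simpa [hg] using hmidhle) (by simpa [hg] using hmidhsum)
    have hle := hxopt xh hxhP
    rw [abel_identity blocks hdisj hcover mv w hw x,
      abel_identity blocks hdisj hcover mv w hw xh] at hle
    have hsum0 : ∑ j', cgap mv j' * (f (Qset blocks j') - ∑ i ∈ Qset blocks j', x i) = 0 := by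
      have hexp : ∀ j' : Fin K,
          cgap mv j' * (f (Qset blocks j') - ∑ i ∈ Qset blocks j', x i)
          = cgap mv j' * ∑ i ∈ Qset blocks j', xh i
            - cgap mv j' * ∑ i ∈ Qset blocks j', x i := by
        intro j'; rw [hxht j']; ring
      have h1 : ∀ j' : Fin K, 0 ≤ cgap mv j' * (f (Qset blocks j') - ∑ i ∈ Qset blocks j', x i) :=
        fun j' => mul_nonneg (le_of_lt (cgap_pos hmvmono hmvpos j'))
          (sub_nonneg.mpr (hxP.2 _))
      have h2 : ∑ j', cgap mv j' * (f (Qset blocks j') - ∑ i ∈ Qset blocks j', x i) ≤ 0 := by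
        rw [Finset.sum_congr rfl (fun j' _ => hexp j'), Finset.sum_sub_distrib]
        linarith
      have h3 := Finset.sum_nonneg (fun j' (_ : j' ∈ Finset.univ) => h1 j')
      linarith
    have := (Finset.sum_eq_zero_iff_of_nonneg
      (fun j' (_ : j' ∈ Finset.univ) => mul_nonneg (le_of_lt (cgap_pos hmvmono hmvpos j'))
        (sub_nonneg.mpr (hxP.2 _)))).mp hsum0 j (Finset.mem_univ j)
    have hc := cgap_pos hmvmono hmvpos j
    have := mul_eq_zero.mp this
    rcases this with h | h
    · exact absurd h (ne_of_gt hc)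
    · linarith [sub_eq_zero.mp h]
  constructor
  · -- baseB ghat ⊆ U
    intro u hu
    obtain ⟨⟨hun, hus⟩, husum⟩ := hu
    have hoff : ∀ i ∉ blocks k, u i = 0 := by
      intro i hi
      refine le_antisymm ?_ (hun i)
      have h1 : ∑ j ∈ ({i} : Finset E), u j ≤ ghat {i} := hus {i}
      rw [Finset.sum_singleton, hghat'] at h1
      have : ({i} : Finset E) ∩ blocks k = ∅ := by
        rw [Finset.singleton_inter_of_notMem hi]
      rw [this, hg0, mul_zero] at h1
      exact h1
    set mid : E → ℝ := fun i => u i / mv k with hmid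
    have hmid0 : ∀ i, 0 ≤ mid i := fun i => div_nonneg (hun i) (le_of_lt hmk)
    have hmids : ∀ i, i ∉ blocks k → mid i = 0 := by
      intro i hi; simp [hmid, hoff i hi]
    have hmidle : ∀ T ⊆ blocks k, ∑ i ∈ T, mid i ≤ g T := by
      intro T hT
      have h1 := hus T
      rw [hghat', Finset.inter_eq_left.mpr hT] at h1
      have : ∑ i ∈ T, mid i = (∑ i ∈ T, u i) / mv k := by
        rw [hmid, Finset.sum_div]
      rw [this, div_le_iff₀ hmk]
      linarith [h1]
    have hmidsum : ∑ i ∈ blocks k, mid i = g (blocks k) := by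
      have h1 : ∑ i, u i = ∑ i ∈ blocks k, u i := by
        refine (Finset.sum_subset (Finset.subset_univ _) (fun i _ hi => hoff i hi)).symm
      rw [hghat', Finset.univ_inter, h1] at husum
      rw [hmid, ← Finset.sum_div] at *
      rw [husum]
      field_simp
    obtain ⟨x, hxP, hxt, hxmid⟩ := main_constr f hf0 hfmono hfsub blocks hdisj hcover k Pgt hPgt
      mid hmid0 hmids (by simpa [hg] using hmidle) (by simpa [hg] using hmidsum)
    rw [hU]
    refine ⟨x, ?_, ?_, hoff⟩
    · rw [hX]
      exact ⟨hxP, hopt x hxP hxt⟩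
    · intro i hi
      rw [hxmid i hi, hmid]
      field_simp
  · -- U ⊆ indepP ghat
    intro u hu
    rw [hU] at hu
    obtain ⟨x, hxX, hub, hu0⟩ := hu
    have hxP : x ∈ indepP f := by rw [hX] at hxX; exact hxX.1
    have hxt := htight x hxX
    have hPt : ∑ i ∈ Pgt, x i = f Pgt := hPgt_tight x hxt
    constructor
    · intro i
      by_cases hi : i ∈ blocks k
      · rw [hub i hi]
        exact mul_nonneg (le_of_lt hmk) (hxP.1 i)
      · rw [hu0 i hi]
    · intro S
      have h1 : ∑ i ∈ S, u i = ∑ i ∈ S ∩ blocks k, u i := by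
        refine (Finset.sum_subset Finset.inter_subset_left (fun i hi hni => ?_)).symm
        exact hu0 i (fun h => hni (Finset.mem_inter.mpr ⟨hi, h⟩))
      have h2 : ∑ i ∈ S ∩ blocks k, u i = mv k * ∑ i ∈ S ∩ blocks k, x i := by
        rw [Finset.mul_sum]
        exact Finset.sum_congr rfl (fun i hi => hub i (Finset.mem_inter.mp hi).2)
      rw [h1, h2, hghat]
      refine mul_le_mul_of_nonneg_left ?_ (le_of_lt hmk)
      have hdisjT : Disjoint (S ∩ blocks k) Pgt :=
        Finset.disjoint_left.mpr (fun i hi hip =>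
          Finset.disjoint_left.mp hPgtk hip (Finset.mem_inter.mp hi).2)
      have h3 : ∑ i ∈ S ∩ blocks k, x i + ∑ i ∈ Pgt, x i
          = ∑ i ∈ (S ∩ blocks k) ∪ Pgt, x i := (Finset.sum_union hdisjT).symm
      have h4 : ∑ i ∈ (S ∩ blocks k) ∪ Pgt, x i ≤ f ((S ∩ blocks k) ∪ Pgt) := hxP.2 _
      rw [Finset.union_comm (S ∩ blocks k) Pgt] at h3 h4
      linarith [hPt]
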